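/- Let u, v : ℝ² → ℝ be smooth with uₓ v_y − u_y vₓ ≡ 1. Then the vector field (−u u_y − v v_y, u uₓ + v vₓ) commutes with the vector field (u v_y − v u_y, −u vₓ + v uₓ): their Lie bracket vanishes identically. -/

import Mathlib

private lemma pd_fst {F : ℝ × ℝ → ℝ} {x y : ℝ} (hF : DifferentiableAt ℝ F (x, y)) :
    HasDerivAt (fun t => F (t, y)) (fderiv ℝ F (x, y) (1, 0)) x := by
  have h1 : HasDerivAt (fun t : ℝ => (t, y)) ((1 : ℝ), (0 : ℝ)) x :=
    (hasDerivAt_id x).prodMk (hasDerivAt_const x y)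
  exact hF.hasFDerivAt.comp_hasDerivAt x h1

private lemma pd_snd {F : ℝ × ℝ → ℝ} {x y : ℝ} (hF : DifferentiableAt ℝ F (x, y)) :
    HasDerivAt (fun t => F (x, t)) (fderiv ℝ F (x, y) (0, 1)) y := by
  have h1 : HasDerivAt (fun t : ℝ => (x, t)) ((0 : ℝ), (1 : ℝ)) y :=
    (hasDerivAt_const y x).prodMk (hasDerivAt_id y)
  exact hF.hasFDerivAt.comp_hasDerivAt y h1

private lemma pd2_fst {F : ℝ × ℝ → ℝ} (hF : ContDiff ℝ 2 F) (v : ℝ × ℝ) (x y : ℝ) :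
    HasDerivAt (fun t => fderiv ℝ F (t, y) v) (fderiv ℝ (fderiv ℝ F) (x, y) (1, 0) v) x := by
  have hG : ContDiff ℝ 1 (fderiv ℝ F) := hF.fderiv_right (by norm_num)
  have hG' : HasFDerivAt (fderiv ℝ F) (fderiv ℝ (fderiv ℝ F) (x, y)) (x, y) :=
    ((hG.differentiable (by norm_num)) (x, y)).hasFDerivAt
  have hA : HasFDerivAt (fun w => fderiv ℝ F w v)
      ((ContinuousLinearMap.apply ℝ ℝ v).comp (fderiv ℝ (fderiv ℝ F) (x, y))) (x, y) :=
    (ContinuousLinearMap.apply ℝ ℝ v).hasFDerivAt.comp (x, y) hG'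
  have h1 : HasDerivAt (fun t : ℝ => (t, y)) ((1 : ℝ), (0 : ℝ)) x :=
    (hasDerivAt_id x).prodMk (hasDerivAt_const x y)
  exact hA.comp_hasDerivAt x h1

private lemma pd2_snd {F : ℝ × ℝ → ℝ} (hF : ContDiff ℝ 2 F) (v : ℝ × ℝ) (x y : ℝ) :
    HasDerivAt (fun t => fderiv ℝ F (x, t) v) (fderiv ℝ (fderiv ℝ F) (x, y) (0, 1) v) y := by
  have hG : ContDiff ℝ 1 (fderiv ℝ F) := hF.fderiv_right (by norm_num)
  have hG' : HasFDerivAt (fderiv ℝ F) (fderiv ℝ (fderiv ℝ F) (x, y)) (x, y) :=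
    ((hG.differentiable (by norm_num)) (x, y)).hasFDerivAt
  have hA : HasFDerivAt (fun w => fderiv ℝ F w v)
      ((ContinuousLinearMap.apply ℝ ℝ v).comp (fderiv ℝ (fderiv ℝ F) (x, y))) (x, y) :=
    (ContinuousLinearMap.apply ℝ ℝ v).hasFDerivAt.comp (x, y) hG'
  have h1 : HasDerivAt (fun t : ℝ => (x, t)) ((0 : ℝ), (1 : ℝ)) y :=
    (hasDerivAt_const y x).prodMk (hasDerivAt_id y)
  exact hA.comp_hasDerivAt y h1

/-- first partial in x -/
noncomputable def pdx (f : ℝ → ℝ → ℝ) (a b : ℝ) : ℝ :=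
  fderiv ℝ (fun w : ℝ × ℝ => f w.1 w.2) (a, b) (1, 0)

/-- first partial in y -/
noncomputable def pdy (f : ℝ → ℝ → ℝ) (a b : ℝ) : ℝ :=
  fderiv ℝ (fun w : ℝ × ℝ => f w.1 w.2) (a, b) (0, 1)

/-- second derivative, applied to two directions -/
noncomputable def pd2 (f : ℝ → ℝ → ℝ) (a b : ℝ) (v w : ℝ × ℝ) : ℝ :=
  fderiv ℝ (fderiv ℝ (fun p : ℝ × ℝ => f p.1 p.2)) (a, b) v w

private lemma had_x {f : ℝ → ℝ → ℝ} (hf : ContDiff ℝ 2 (fun w : ℝ × ℝ => f w.1 w.2))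
    (x y : ℝ) : HasDerivAt (fun t => f t y) (pdx f x y) x :=
  pd_fst ((hf.differentiable (by norm_num)) (x, y))

private lemma had_y {f : ℝ → ℝ → ℝ} (hf : ContDiff ℝ 2 (fun w : ℝ × ℝ => f w.1 w.2))
    (x y : ℝ) : HasDerivAt (fun t => f x t) (pdy f x y) y :=
  pd_snd ((hf.differentiable (by norm_num)) (x, y))

private lemma had_x_pdx {f : ℝ → ℝ → ℝ} (hf : ContDiff ℝ 2 (fun w : ℝ × ℝ => f w.1 w.2))
    (x y : ℝ) : HasDerivAt (fun t => pdx f t y) (pd2 f x y (1, 0) (1, 0)) x :=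
  pd2_fst hf (1, 0) x y

private lemma had_y_pdx {f : ℝ → ℝ → ℝ} (hf : ContDiff ℝ 2 (fun w : ℝ × ℝ => f w.1 w.2))
    (x y : ℝ) : HasDerivAt (fun t => pdx f x t) (pd2 f x y (0, 1) (1, 0)) y :=
  pd2_snd hf (1, 0) x y

private lemma had_x_pdy {f : ℝ → ℝ → ℝ} (hf : ContDiff ℝ 2 (fun w : ℝ × ℝ => f w.1 w.2))
    (x y : ℝ) : HasDerivAt (fun t => pdy f t y) (pd2 f x y (1, 0) (0, 1)) x :=
  pd2_fst hf (0, 1) x y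

private lemma had_y_pdy {f : ℝ → ℝ → ℝ} (hf : ContDiff ℝ 2 (fun w : ℝ × ℝ => f w.1 w.2))
    (x y : ℝ) : HasDerivAt (fun t => pdy f x t) (pd2 f x y (0, 1) (0, 1)) y :=
  pd2_snd hf (0, 1) x y

private lemma symm2 {f : ℝ → ℝ → ℝ} (hf : ContDiff ℝ 2 (fun w : ℝ × ℝ => f w.1 w.2))
    (x y : ℝ) : pd2 f x y (0, 1) (1, 0) = pd2 f x y (1, 0) (0, 1) :=
  hf.contDiffAt.isSymmSndFDerivAt (by norm_num) _ _

theorem area_preserving_hamiltonian_commuting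
    (u v : ℝ → ℝ → ℝ)
    (hu : ContDiff ℝ 2 (fun w : ℝ × ℝ => u w.1 w.2))
    (hv : ContDiff ℝ 2 (fun w : ℝ × ℝ => v w.1 w.2))
    (hjac : ∀ x y : ℝ,
      deriv (fun t => u t y) x * deriv (fun t => v x t) y -
        deriv (fun t => u x t) y * deriv (fun t => v t y) x = 1) :
    let p : ℝ → ℝ → ℝ := fun x y =>
      -(u x y * deriv (fun t => u x t) y) - v x y * deriv (fun t => v x t) y
    let q : ℝ → ℝ → ℝ := fun x y =>
      u x y * deriv (fun t => u t y) x + v x y * deriv (fun t => v t y) x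
    let r : ℝ → ℝ → ℝ := fun x y =>
      u x y * deriv (fun t => v x t) y - v x y * deriv (fun t => u x t) y
    let s : ℝ → ℝ → ℝ := fun x y =>
      -(u x y * deriv (fun t => v t y) x) + v x y * deriv (fun t => u t y) x
    ∀ x y : ℝ,
      r x y * deriv (fun t => p t y) x + s x y * deriv (fun t => p x t) y -
          p x y * deriv (fun t => r t y) x - q x y * deriv (fun t => r x t) y = 0 ∧
      r x y * deriv (fun t => q t y) x + s x y * deriv (fun t => q x t) y -
          p x y * deriv (fun t => s t y) x - q x y * deriv (fun t => s x t) y = 0 := by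
  intro p q r s x y
  -- value rewrites
  have hpe : p x y = -(u x y * pdy u x y) - v x y * pdy v x y := by
    show -(u x y * deriv (fun t => u x t) y) - v x y * deriv (fun t => v x t) y = _
    rw [(had_y hu x y).deriv, (had_y hv x y).deriv]
  have hqe : q x y = u x y * pdx u x y + v x y * pdx v x y := by
    show u x y * deriv (fun t => u t y) x + v x y * deriv (fun t => v t y) x = _
    rw [(had_x hu x y).deriv, (had_x hv x y).deriv]
  have hre : r x y = u x y * pdy v x y - v x y * pdy u x y := by
    show u x y * deriv (fun t => v x t) y - v x y * deriv (fun t => u x t) y = _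
    rw [(had_y hv x y).deriv, (had_y hu x y).deriv]
  have hse : s x y = -(u x y * pdx v x y) + v x y * pdx u x y := by
    show -(u x y * deriv (fun t => v t y) x) + v x y * deriv (fun t => u t y) x = _
    rw [(had_x hv x y).deriv, (had_x hu x y).deriv]
  -- function rewrites
  have fp1 : (fun t => p t y) = fun t => -(u t y * pdy u t y) - v t y * pdy v t y := by
    funext t
    show -(u t y * deriv (fun s => u t s) y) - v t y * deriv (fun s => v t s) y = _
    rw [(had_y hu t y).deriv, (had_y hv t y).deriv]
  have fp2 : (fun t => p x t) = fun t => -(u x t * pdy u x t) - v x t * pdy v x t := by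
    funext t
    show -(u x t * deriv (fun s => u x s) t) - v x t * deriv (fun s => v x s) t = _
    rw [(had_y hu x t).deriv, (had_y hv x t).deriv]
  have fq1 : (fun t => q t y) = fun t => u t y * pdx u t y + v t y * pdx v t y := by
    funext t
    show u t y * deriv (fun s => u s y) t + v t y * deriv (fun s => v s y) t = _
    rw [(had_x hu t y).deriv, (had_x hv t y).deriv]
  have fq2 : (fun t => q x t) = fun t => u x t * pdx u x t + v x t * pdx v x t := by
    funext t
    show u x t * deriv (fun s => u s t) x + v x t * deriv (fun s => v s t) x = _
    rw [(had_x hu x t).deriv, (had_x hv x t).deriv]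
  have fr1 : (fun t => r t y) = fun t => u t y * pdy v t y - v t y * pdy u t y := by
    funext t
    show u t y * deriv (fun s => v t s) y - v t y * deriv (fun s => u t s) y = _
    rw [(had_y hv t y).deriv, (had_y hu t y).deriv]
  have fr2 : (fun t => r x t) = fun t => u x t * pdy v x t - v x t * pdy u x t := by
    funext t
    show u x t * deriv (fun s => v x s) t - v x t * deriv (fun s => u x s) t = _
    rw [(had_y hv x t).deriv, (had_y hu x t).deriv]
  have fs1 : (fun t => s t y) = fun t => -(u t y * pdx v t y) + v t y * pdx u t y := by
    funext t
    show -(u t y * deriv (fun s => v s y) t) + v t y * deriv (fun s => u s y) t = _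
    rw [(had_x hv t y).deriv, (had_x hu t y).deriv]
  have fs2 : (fun t => s x t) = fun t => -(u x t * pdx v x t) + v x t * pdx u x t := by
    funext t
    show -(u x t * deriv (fun s => v s t) x) + v x t * deriv (fun s => u s t) x = _
    rw [(had_x hv x t).deriv, (had_x hu x t).deriv]
  -- derivatives of the rewritten functions
  have hd_p1 : HasDerivAt (fun t => -(u t y * pdy u t y) - v t y * pdy v t y)
      (-(pdx u x y * pdy u x y + u x y * pd2 u x y (1, 0) (0, 1)) -
        (pdx v x y * pdy v x y + v x y * pd2 v x y (1, 0) (0, 1))) x :=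
    (((had_x hu x y).mul (had_x_pdy hu x y)).neg).sub ((had_x hv x y).mul (had_x_pdy hv x y))
  have hd_p2 : HasDerivAt (fun t => -(u x t * pdy u x t) - v x t * pdy v x t)
      (-(pdy u x y * pdy u x y + u x y * pd2 u x y (0, 1) (0, 1)) -
        (pdy v x y * pdy v x y + v x y * pd2 v x y (0, 1) (0, 1))) y :=
    (((had_y hu x y).mul (had_y_pdy hu x y)).neg).sub ((had_y hv x y).mul (had_y_pdy hv x y))
  have hd_q1 : HasDerivAt (fun t => u t y * pdx u t y + v t y * pdx v t y)
      ((pdx u x y * pdx u x y + u x y * pd2 u x y (1, 0) (1, 0)) +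
        (pdx v x y * pdx v x y + v x y * pd2 v x y (1, 0) (1, 0))) x :=
    ((had_x hu x y).mul (had_x_pdx hu x y)).add ((had_x hv x y).mul (had_x_pdx hv x y))
  have hd_q2 : HasDerivAt (fun t => u x t * pdx u x t + v x t * pdx v x t)
      ((pdy u x y * pdx u x y + u x y * pd2 u x y (0, 1) (1, 0)) +
        (pdy v x y * pdx v x y + v x y * pd2 v x y (0, 1) (1, 0))) y :=
    ((had_y hu x y).mul (had_y_pdx hu x y)).add ((had_y hv x y).mul (had_y_pdx hv x y))
  have hd_r1 : HasDerivAt (fun t => u t y * pdy v t y - v t y * pdy u t y)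
      ((pdx u x y * pdy v x y + u x y * pd2 v x y (1, 0) (0, 1)) -
        (pdx v x y * pdy u x y + v x y * pd2 u x y (1, 0) (0, 1))) x :=
    ((had_x hu x y).mul (had_x_pdy hv x y)).sub ((had_x hv x y).mul (had_x_pdy hu x y))
  have hd_r2 : HasDerivAt (fun t => u x t * pdy v x t - v x t * pdy u x t)
      ((pdy u x y * pdy v x y + u x y * pd2 v x y (0, 1) (0, 1)) -
        (pdy v x y * pdy u x y + v x y * pd2 u x y (0, 1) (0, 1))) y :=
    ((had_y hu x y).mul (had_y_pdy hv x y)).sub ((had_y hv x y).mul (had_y_pdy hu x y))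
  have hd_s1 : HasDerivAt (fun t => -(u t y * pdx v t y) + v t y * pdx u t y)
      (-(pdx u x y * pdx v x y + u x y * pd2 v x y (1, 0) (1, 0)) +
        (pdx v x y * pdx u x y + v x y * pd2 u x y (1, 0) (1, 0))) x :=
    (((had_x hu x y).mul (had_x_pdx hv x y)).neg).add ((had_x hv x y).mul (had_x_pdx hu x y))
  have hd_s2 : HasDerivAt (fun t => -(u x t * pdx v x t) + v x t * pdx u x t)
      (-(pdy u x y * pdx v x y + u x y * pd2 v x y (0, 1) (1, 0)) +
        (pdy v x y * pdx u x y + v x y * pd2 u x y (0, 1) (1, 0))) y :=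
    (((had_y hu x y).mul (had_y_pdx hv x y)).neg).add ((had_y hv x y).mul (had_y_pdx hu x y))
  -- differentiated Jacobian relations
  have hj1fun : (fun t => pdx u t y * pdy v t y - pdy u t y * pdx v t y) =
      fun _ : ℝ => (1 : ℝ) := by
    funext t
    have h := hjac t y
    rw [(had_x hu t y).deriv, (had_y hv t y).deriv, (had_y hu t y).deriv,
      (had_x hv t y).deriv] at h
    exact h
  have hj2fun : (fun t => pdx u x t * pdy v x t - pdy u x t * pdx v x t) =
      fun _ : ℝ => (1 : ℝ) := by
    funext t
    have h := hjac x t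
    rw [(had_x hu x t).deriv, (had_y hv x t).deriv, (had_y hu x t).deriv,
      (had_x hv x t).deriv] at h
    exact h
  have hE1 : (pd2 u x y (1, 0) (1, 0) * pdy v x y + pdx u x y * pd2 v x y (1, 0) (0, 1)) -
      (pd2 u x y (1, 0) (0, 1) * pdx v x y + pdy u x y * pd2 v x y (1, 0) (1, 0)) = 0 := by
    have hJ : HasDerivAt (fun t => pdx u t y * pdy v t y - pdy u t y * pdx v t y)
        ((pd2 u x y (1, 0) (1, 0) * pdy v x y + pdx u x y * pd2 v x y (1, 0) (0, 1)) -
          (pd2 u x y (1, 0) (0, 1) * pdx v x y + pdy u x y * pd2 v x y (1, 0) (1, 0))) x :=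
      ((had_x_pdx hu x y).mul (had_x_pdy hv x y)).sub ((had_x_pdy hu x y).mul (had_x_pdx hv x y))
    have h0 : HasDerivAt (fun t => pdx u t y * pdy v t y - pdy u t y * pdx v t y) 0 x := by
      rw [hj1fun]; exact hasDerivAt_const x 1
    exact hJ.unique h0
  have hE2 : (pd2 u x y (0, 1) (1, 0) * pdy v x y + pdx u x y * pd2 v x y (0, 1) (0, 1)) -
      (pd2 u x y (0, 1) (0, 1) * pdx v x y + pdy u x y * pd2 v x y (0, 1) (1, 0)) = 0 := by
    have hJ : HasDerivAt (fun t => pdx u x t * pdy v x t - pdy u x t * pdx v x t)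
        ((pd2 u x y (0, 1) (1, 0) * pdy v x y + pdx u x y * pd2 v x y (0, 1) (0, 1)) -
          (pd2 u x y (0, 1) (0, 1) * pdx v x y + pdy u x y * pd2 v x y (0, 1) (1, 0))) y :=
      ((had_y_pdx hu x y).mul (had_y_pdy hv x y)).sub ((had_y_pdy hu x y).mul (had_y_pdx hv x y))
    have h0 : HasDerivAt (fun t => pdx u x t * pdy v x t - pdy u x t * pdx v x t) 0 y := by
      rw [hj2fun]; exact hasDerivAt_const y 1
    exact hJ.unique h0
  -- symmetry of second derivatives
  have hsymu : pd2 u x y (0, 1) (1, 0) = pd2 u x y (1, 0) (0, 1) := symm2 hu x y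
  have hsymv : pd2 v x y (0, 1) (1, 0) = pd2 v x y (1, 0) (0, 1) := symm2 hv x y
  rw [hsymu, hsymv] at hE2
  constructor
  · rw [fp1, fp2, fr1, fr2, hd_p1.deriv, hd_p2.deriv, hd_r1.deriv, hd_r2.deriv,
      hpe, hqe, hre, hse]
    linear_combination (-(u x y ^ 2 + v x y ^ 2)) * hE2
  · rw [fq1, fq2, fs1, fs2, hd_q1.deriv, hd_q2.deriv, hd_s1.deriv, hd_s2.deriv,
      hpe, hqe, hre, hse, hsymu, hsymv]
    linear_combination (u x y ^ 2 + v x y ^ 2) * hE1
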